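/- Define h(x) := e^{−1/|x|}·sin(1/x) for x ≠ 0, h(0) := 0, and g(x) := ∫₀ˣ (u^{−2} e^{−1/|u|} sin(1/u) − u^{−2} e^{−1/|u|}) du (integrand understood as 0 at u = 0). Then g and h are C^∞ on all of ℝ; for every x > 0, g′(x) = x^{−2} e^{−1/x} sin(1/x) − x^{−2} e^{−1/x} and h′(x) = x^{−2} e^{−1/x} sin(1/x) − x^{−2} e^{−1/x} cos(1/x); and for every integer n ≥ 1, the n-th derivatives satisfy g^{(n)}(0) = 0 and h^{(n)}(0) = 0. -/

import Mathlib

open Filter Metric Set Real Topology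

noncomputable section

/-- Left derivative `f′₋(x) = d`: `(f y - f x)/(y - x) → d` as `y ↑ x`. -/
def HasLeftDeriv (f : ℝ → ℝ) (x d : ℝ) : Prop :=
  Filter.Tendsto (fun y : ℝ => (f y - f x) / (y - x)) (nhdsWithin x (Set.Iio x)) (nhds d)

/-- Right derivative `f′₊(x) = d`: `(f y - f x)/(y - x) → d` as `y ↓ x`. -/
def HasRightDeriv (f : ℝ → ℝ) (x d : ℝ) : Prop :=
  Filter.Tendsto (fun y : ℝ => (f y - f x) / (y - x)) (nhdsWithin x (Set.Ioi x)) (nhds d)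

/-- `x` is a `δ`-stationary point of `f : ℝ → ℝ`: `f′₋(x) ≤ δ` and `f′₊(x) ≥ -δ`. -/
def IsDeltaStationaryPt1 (f : ℝ → ℝ) (δ x : ℝ) : Prop :=
  ∃ dm dp : ℝ, HasLeftDeriv f x dm ∧ HasRightDeriv f x dp ∧ dm ≤ δ ∧ -δ ≤ dp

/-- `x` is a stationary point of `f : ℝ → ℝ`: `f′₋(x) ≤ 0` and `f′₊(x) ≥ 0`. -/
def IsStationaryPt1 (f : ℝ → ℝ) (x : ℝ) : Prop :=
  IsDeltaStationaryPt1 f 0 x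

/-- `h(x) = e^{-1/|x|} sin(1/x)` for `x ≠ 0`, `h(0) = 0`. -/
def hEx (x : ℝ) : ℝ := if x = 0 then 0 else Real.exp (-1 / |x|) * Real.sin (1 / x)

/-- `g(x) = ∫₀ˣ (u⁻² e^{-1/|u|} sin(1/u) - u⁻² e^{-1/|u|}) du`, integrand `0` at `u = 0`. -/
def gEx (x : ℝ) : ℝ := ∫ u in (0 : ℝ)..x,
  if u = 0 then 0
  else u⁻¹ ^ 2 * Real.exp (-1 / |u|) * Real.sin (1 / u) - u⁻¹ ^ 2 * Real.exp (-1 / |u|)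

/-- `f(x) = min {0, h(|x|)} - g(|x|)`. -/
def fEx (x : ℝ) : ℝ := min 0 (hEx |x|) - gEx |x|

namespace GexAux

open Polynomial Complex

/-- One-sided function `p(1/x) e^{c/x}` for `x > 0`, `0` for `x ≤ 0`. -/
def F (c : ℂ) (p : ℂ[X]) (x : ℝ) : ℂ :=
  if 0 < x then p.eval (↑x)⁻¹ * Complex.exp (c * (↑x)⁻¹) else 0

/-- The polynomial appearing in the derivative of `F c p`. -/
def P (c : ℂ) (p : ℂ[X]) : ℂ[X] := -(X ^ 2 * (derivative p + C c * p))

variable {c : ℂ}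

lemma tendsto_atTop (hc : c.re = -1) (p : ℂ[X]) :
    Tendsto (fun t : ℝ => p.eval (t : ℂ) * Complex.exp (c * t)) atTop (𝓝 0) := by
  have heq : (fun t : ℝ => p.eval (t:ℂ) * Complex.exp (c * t)) =
      fun t : ℝ => ∑ k ∈ Finset.range (p.natDegree + 1),
        p.coeff k * (t:ℂ) ^ k * Complex.exp (c * t) := by
    funext t
    rw [Polynomial.eval_eq_sum_range, Finset.sum_mul]
  rw [heq]
  have h0 : (0:ℂ) = ∑ k ∈ Finset.range (p.natDegree + 1), 0 := by simp
  rw [h0]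
  refine tendsto_finset_sum _ fun k _ => ?_
  have hb : Tendsto (fun t:ℝ => ‖p.coeff k‖ * (t ^ k * Real.exp (-t))) atTop (𝓝 0) := by
    simpa using (tendsto_pow_mul_exp_neg_atTop_nhds_zero k).const_mul ‖p.coeff k‖
  refine squeeze_zero_norm' ?_ hb
  filter_upwards [eventually_ge_atTop (0:ℝ)] with t ht
  have : ‖p.coeff k * (t:ℂ) ^ k * Complex.exp (c * t)‖
      = ‖p.coeff k‖ * (|t| ^ k * Real.exp ((c * t).re)) := by
    simp [norm_mul, Complex.norm_exp, mul_assoc]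
  rw [this, _root_.abs_of_nonneg ht]
  have : (c * (t:ℂ)).re = -t := by
    simp [Complex.mul_re, hc]
  rw [this]

lemma tendsto_zero_right (hc : c.re = -1) (p : ℂ[X]) :
    Tendsto (fun y : ℝ => p.eval (↑y)⁻¹ * Complex.exp (c * (↑y)⁻¹)) (𝓝[>] (0:ℝ)) (𝓝 0) := by
  have := (tendsto_atTop hc p).comp tendsto_inv_nhdsGT_zero
  refine this.congr fun y => ?_
  simp [Function.comp, Complex.ofReal_inv]

end GexAux

namespace GexAux
open Polynomial Complex

variable {c : ℂ}

lemma hasDerivAt_aux (p : ℂ[X]) {z : ℂ} (hz : z ≠ 0) :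
    HasDerivAt (fun z : ℂ => p.eval z⁻¹ * Complex.exp (c * z⁻¹))
      ((P c p).eval z⁻¹ * Complex.exp (c * z⁻¹)) z := by
  have h1 : HasDerivAt (fun z : ℂ => z⁻¹) (-1 / z ^ 2) z := by
    exact (hasDerivAt_inv hz).congr_deriv (by ring)
  have h2 : HasDerivAt (fun z : ℂ => p.eval z⁻¹) ((derivative p).eval z⁻¹ * (-1 / z ^ 2)) z :=
    (p.hasDerivAt z⁻¹).comp z h1
  have h3 : HasDerivAt (fun z : ℂ => Complex.exp (c * z⁻¹))
      (Complex.exp (c * z⁻¹) * (c * (-1 / z ^ 2))) z :=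
    (Complex.hasDerivAt_exp (c * z⁻¹)).comp z (h1.const_mul c)
  have h4 := h2.mul h3
  refine h4.congr_deriv ?_
  simp only [P, eval_neg, eval_mul, eval_pow, eval_X, eval_add, eval_C]
  field_simp
  ring

lemma hasDerivAt_F (hc : c.re = -1) (p : ℂ[X]) (x : ℝ) :
    HasDerivAt (F c p) (F c (P c p) x) x := by
  rcases lt_trichotomy x 0 with hx | rfl | hx
  · have hev : (fun _ : ℝ => (0:ℂ)) =ᶠ[𝓝 x] F c p := by
      filter_upwards [Iio_mem_nhds hx] with y (hy : y < 0)
      simp [F, not_lt.2 hy.le]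
    have h0 : HasDerivAt (fun _ : ℝ => (0:ℂ)) 0 x := hasDerivAt_const x 0
    have := h0.congr_of_eventuallyEq hev.symm
    simpa [F, not_lt.2 hx.le] using this
  · have hF0 : F c p 0 = 0 := by simp [F]
    have hval : F c (P c p) 0 = 0 := by simp [F]
    rw [hval, hasDerivAt_iff_tendsto_slope]
    rw [← nhdsLT_sup_nhdsGT, tendsto_sup]
    constructor
    · apply Tendsto.congr' (f₁ := fun _ => (0:ℂ))
      · filter_upwards [self_mem_nhdsWithin] with y (hy : y < 0)
        simp [slope, F, not_lt.2 hy.le, hF0]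
      · exact tendsto_const_nhds
    · apply Tendsto.congr' (f₁ := fun y : ℝ =>
        (X * p : ℂ[X]).eval (↑y)⁻¹ * Complex.exp (c * (↑y)⁻¹))
      · filter_upwards [self_mem_nhdsWithin] with y (hy : 0 < y)
        have hs : slope (F c p) 0 y = (y : ℝ)⁻¹ • F c p y := by
          simp [slope, hF0]
        have hFy : F c p y = p.eval (↑y)⁻¹ * Complex.exp (c * (↑y)⁻¹) := if_pos hy
        rw [hs, hFy, Complex.real_smul, Complex.ofReal_inv, eval_mul, eval_X]
        ring
      · exact tendsto_zero_right hc (X * p)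
  · have hx' : (x:ℂ) ≠ 0 := by exact_mod_cast hx.ne'
    have hev : F c p =ᶠ[𝓝 x] fun y : ℝ => p.eval (↑y)⁻¹ * Complex.exp (c * (↑y)⁻¹) := by
      filter_upwards [Ioi_mem_nhds hx] with y (hy : 0 < y)
      simp [F, hy]
    have h := (hasDerivAt_aux (c := c) p hx').comp_ofReal
    have h2 := h.congr_of_eventuallyEq hev
    simpa [F, hx] using h2

lemma deriv_F (hc : c.re = -1) (p : ℂ[X]) : deriv (F c p) = F c (P c p) :=
  funext fun x => (hasDerivAt_F hc p x).deriv

lemma differentiable_F (hc : c.re = -1) (p : ℂ[X]) : Differentiable ℝ (F c p) :=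
  fun x => (hasDerivAt_F hc p x).differentiableAt

lemma contDiff_nat_F (hc : c.re = -1) (n : ℕ) : ∀ p : ℂ[X], ContDiff ℝ n (F c p) := by
  induction n with
  | zero =>
    intro p
    exact contDiff_zero.2 (differentiable_F hc p).continuous
  | succ n ih =>
    intro p
    have hcast : ((n + 1 : ℕ) : WithTop ℕ∞) = (n : WithTop ℕ∞) + 1 := by push_cast; ring
    rw [hcast, contDiff_succ_iff_deriv]
    refine ⟨differentiable_F hc p, by simp, ?_⟩
    rw [deriv_F hc p]; exact ih _

lemma contDiff_F (hc : c.re = -1) (p : ℂ[X]) : ContDiff ℝ (⊤ : ℕ∞) (F c p) :=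
  contDiff_infty.2 fun n => contDiff_nat_F hc n p

lemma iteratedDeriv_F_zero (hc : c.re = -1) (n : ℕ) :
    ∀ p : ℂ[X], iteratedDeriv n (F c p) 0 = 0 := by
  induction n with
  | zero => intro p; simp [F]
  | succ n ih =>
    intro p
    rw [iteratedDeriv_succ', deriv_F hc p]
    exact ih _

end GexAux

namespace GexAux
open Polynomial Complex

/-- helpers for iterated derivatives at a point -/
lemma itd_re (n : ℕ) {f : ℝ → ℂ} (hf : ContDiff ℝ (⊤ : ℕ∞) f) (x : ℝ) :
    iteratedDeriv n (fun y => (f y).re) x = (iteratedDeriv n f x).re := by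
  have h := Complex.reCLM.iteratedFDeriv_comp_left (𝕜 := ℝ) (hf.contDiffAt (x := x))
    (i := n) (by exact_mod_cast le_top)
  rw [iteratedDeriv_eq_iteratedFDeriv, iteratedDeriv_eq_iteratedFDeriv]
  rw [show (fun y => (f y).re) = (⇑Complex.reCLM ∘ f) from rfl, h]
  rfl

lemma itd_add (n : ℕ) {f g : ℝ → ℂ} (hf : ContDiff ℝ (⊤ : ℕ∞) f)
    (hg : ContDiff ℝ (⊤ : ℕ∞) g) (x : ℝ) :
    iteratedDeriv n (fun y => f y + g y) x = iteratedDeriv n f x + iteratedDeriv n g x := by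
  rw [← iteratedDerivWithin_univ, ← iteratedDerivWithin_univ, ← iteratedDerivWithin_univ]
  exact iteratedDerivWithin_add (Set.mem_univ x) uniqueDiffOn_univ
    (hf.contDiffWithinAt.of_le (by exact_mod_cast le_top))
    (hg.contDiffWithinAt.of_le (by exact_mod_cast le_top))

lemma itd_sub (n : ℕ) {f g : ℝ → ℂ} (hf : ContDiff ℝ (⊤ : ℕ∞) f)
    (hg : ContDiff ℝ (⊤ : ℕ∞) g) (x : ℝ) :
    iteratedDeriv n (fun y => f y - g y) x = iteratedDeriv n f x - iteratedDeriv n g x := by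
  rw [← iteratedDerivWithin_univ, ← iteratedDerivWithin_univ, ← iteratedDerivWithin_univ]
  exact iteratedDerivWithin_sub (Set.mem_univ x) uniqueDiffOn_univ
    (hf.contDiffWithinAt.of_le (by exact_mod_cast le_top))
    (hg.contDiffWithinAt.of_le (by exact_mod_cast le_top))

lemma itd_cmul (n : ℕ) (a : ℂ) {f : ℝ → ℂ} (hf : ContDiff ℝ (⊤ : ℕ∞) f) (x : ℝ) :
    iteratedDeriv n (fun y => a * f y) x = a * iteratedDeriv n f x := by
  rw [← iteratedDerivWithin_univ, ← iteratedDerivWithin_univ]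
  have := iteratedDerivWithin_const_smul (n := n) (Set.mem_univ x) uniqueDiffOn_univ a
    (hf.contDiffWithinAt.of_le (by exact_mod_cast le_top) : ContDiffWithinAt ℝ n f univ x)
  simpa [smul_eq_mul] using this

end GexAux

namespace GexAux
open Polynomial Complex

def c₁ : ℂ := -1 + I
lemma hc₁ : c₁.re = -1 := by simp [c₁]
lemma hc₂ : (-1 : ℂ).re = -1 := by simp

def ψ : ℝ → ℂ := F c₁ 1
def φ : ℝ → ℂ := F (-1) 1
def dψ : ℝ → ℂ := F c₁ (P c₁ 1)
def dφ : ℝ → ℂ := F (-1) (P (-1) 1)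

lemma psi_pos {x : ℝ} (hx : 0 < x) : ψ x = Complex.exp (c₁ * ↑(x⁻¹)) := by
  simp [ψ, F, hx, Complex.ofReal_inv]
lemma psi_nonpos {x : ℝ} (hx : ¬ 0 < x) : ψ x = 0 := by simp [ψ, F, hx]
lemma phi_pos {x : ℝ} (hx : 0 < x) : φ x = Complex.exp (-↑(x⁻¹)) := by
  simp [φ, F, hx, Complex.ofReal_inv]
lemma phi_nonpos {x : ℝ} (hx : ¬ 0 < x) : φ x = 0 := by simp [φ, F, hx]

lemma dpsi_pos {x : ℝ} (hx : 0 < x) :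
    dψ x = -c₁ * ↑(x⁻¹) ^ 2 * Complex.exp (c₁ * ↑(x⁻¹)) := by
  simp [dψ, F, P, hx, Complex.ofReal_inv]
lemma dpsi_nonpos {x : ℝ} (hx : ¬ 0 < x) : dψ x = 0 := by simp [dψ, F, hx]
lemma dphi_pos {x : ℝ} (hx : 0 < x) :
    dφ x = ↑(x⁻¹) ^ 2 * Complex.exp (-↑(x⁻¹)) := by
  simp [dφ, F, P, hx, Complex.ofReal_inv]
lemma dphi_nonpos {x : ℝ} (hx : ¬ 0 < x) : dφ x = 0 := by simp [dφ, F, hx]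

lemma exp_c₁_re (t : ℝ) : (Complex.exp (c₁ * ↑t)).re = Real.exp (-t) * Real.cos t := by
  simp [Complex.exp_re, c₁, Complex.mul_re, Complex.mul_im]
lemma exp_c₁_im (t : ℝ) : (Complex.exp (c₁ * ↑t)).im = Real.exp (-t) * Real.sin t := by
  simp [Complex.exp_im, c₁, Complex.mul_re, Complex.mul_im]
lemma exp_neg_re (t : ℝ) : (Complex.exp (-(t:ℂ))).re = Real.exp (-t) := by
  simp [Complex.exp_re]
lemma exp_neg_im (t : ℝ) : (Complex.exp (-(t:ℂ))).im = 0 := by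
  simp [Complex.exp_im]

def Φh (x : ℝ) : ℂ := -I * (ψ x - ψ (-x))
def Φg (x : ℝ) : ℂ := (1 - I)/2 * (ψ x + ψ (-x)) - φ x + φ (-x)
def DΦh (x : ℝ) : ℂ := -I * (dψ x + dψ (-x))
def DΦg (x : ℝ) : ℂ := (1 - I)/2 * (dψ x - dψ (-x)) - dφ x - dφ (-x)

lemma hasDerivAt_psi_neg (x : ℝ) :
    HasDerivAt (fun y : ℝ => ψ (-y)) (-dψ (-x)) x := by
  have h := (hasDerivAt_F hc₁ 1 (-x)).scomp x (hasDerivAt_neg x)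
  simp only [neg_one_smul] at h; exact h
lemma hasDerivAt_phi_neg (x : ℝ) :
    HasDerivAt (fun y : ℝ => φ (-y)) (-dφ (-x)) x := by
  have h := (hasDerivAt_F hc₂ 1 (-x)).scomp x (hasDerivAt_neg x)
  simp only [neg_one_smul] at h; exact h

lemma hasDerivAt_Φh (x : ℝ) : HasDerivAt Φh (DΦh x) x := by
  have h : HasDerivAt Φh (-I * (dψ x - -dψ (-x))) x :=
    ((hasDerivAt_F hc₁ 1 x).sub (hasDerivAt_psi_neg x)).const_mul (-I)
  have e : -I * (dψ x - -dψ (-x)) = DΦh x := by rw [DΦh]; ring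
  rwa [e] at h

lemma hasDerivAt_Φg (x : ℝ) : HasDerivAt Φg (DΦg x) x := by
  have h : HasDerivAt Φg ((1 - I)/2 * (dψ x + -dψ (-x)) - dφ x + -dφ (-x)) x :=
    ((((hasDerivAt_F hc₁ 1 x).add (hasDerivAt_psi_neg x)).const_mul ((1 - I)/2)).sub
      (hasDerivAt_F hc₂ 1 x)).add (hasDerivAt_phi_neg x)
  have e : (1 - I)/2 * (dψ x + -dψ (-x)) - dφ x + -dφ (-x) = DΦg x := by
    rw [DΦg]; ring
  rwa [e] at h

lemma contDiff_ψ : ContDiff ℝ (⊤ : ℕ∞) ψ := contDiff_F hc₁ 1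
lemma contDiff_φ : ContDiff ℝ (⊤ : ℕ∞) φ := contDiff_F hc₂ 1
lemma contDiff_ψn : ContDiff ℝ (⊤ : ℕ∞) (fun x : ℝ => ψ (-x)) :=
  contDiff_ψ.comp contDiff_neg
lemma contDiff_φn : ContDiff ℝ (⊤ : ℕ∞) (fun x : ℝ => φ (-x)) :=
  contDiff_φ.comp contDiff_neg

lemma contDiff_Φh : ContDiff ℝ (⊤ : ℕ∞) Φh :=
  (contDiff_const.mul (contDiff_ψ.sub contDiff_ψn) : )
lemma contDiff_Φg : ContDiff ℝ (⊤ : ℕ∞) Φg :=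
  ((contDiff_const.mul (contDiff_ψ.add contDiff_ψn)).sub contDiff_φ).add contDiff_φn

end GexAux

namespace GexAux
open Polynomial Complex

lemma c₁_im : c₁.im = 1 := by simp [c₁]
lemma K_re : ((1 - I)/2 : ℂ).re = 1/2 := by simp [Complex.div_re]
lemma K_im : ((1 - I)/2 : ℂ).im = -1/2 := by simp [Complex.div_im]

lemma hasDerivAt_re {f : ℝ → ℂ} {d : ℂ} {x : ℝ} (h : HasDerivAt f d x) :
    HasDerivAt (fun y => (f y).re) d.re x := by
  have h' := (Complex.reCLM.hasFDerivAt.comp x h.hasFDerivAt).hasDerivAt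
  simp at h'; exact h'

lemma hEx_eq : hEx = fun x => (Φh x).re := by
  funext x
  rcases lt_trichotomy x 0 with hx | rfl | hx
  · have h1 : ¬ (0:ℝ) < x := by linarith
    have h2 : (0:ℝ) < -x := by linarith
    rw [hEx, if_neg hx.ne, Φh, psi_nonpos h1, psi_pos h2, abs_of_neg hx, zero_sub]
    set t := (-x)⁻¹ with ht
    have hAre := exp_c₁_re t
    have hAim := exp_c₁_im t
    set A := Complex.exp (c₁ * (t:ℂ)) with hA
    have e1 : -1 / -x = -t := by rw [ht, inv_neg]; field_simp
    have e2 : 1 / x = -t := by rw [ht, inv_neg]; simp [one_div]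
    rw [e1, e2]
    simp only [Complex.mul_re, Complex.mul_im, Complex.neg_re, Complex.neg_im,
      Complex.I_re, Complex.I_im, hAre, hAim, Real.sin_neg, Real.cos_neg]
    ring
  · simp [hEx, Φh, psi_nonpos (lt_irrefl 0)]
  · have h2 : ¬ (0:ℝ) < -x := by linarith
    rw [hEx, if_neg hx.ne', Φh, psi_pos hx, psi_nonpos h2, sub_zero, abs_of_pos hx]
    set t := x⁻¹ with ht
    have hAre := exp_c₁_re t
    have hAim := exp_c₁_im t
    set A := Complex.exp (c₁ * (t:ℂ)) with hA
    have e1 : -1 / x = -t := by rw [ht]; field_simp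
    have e2 : 1 / x = t := one_div x
    rw [e1, e2]
    simp only [Complex.mul_re, Complex.mul_im, Complex.neg_re, Complex.neg_im,
      Complex.I_re, Complex.I_im, hAre, hAim]
    ring

lemma DΦh_re {x : ℝ} (hx : 0 < x) :
    (DΦh x).re = x⁻¹ ^ 2 * Real.exp (-1 / x) * Real.sin (1 / x)
      - x⁻¹ ^ 2 * Real.exp (-1 / x) * Real.cos (1 / x) := by
  have h2 : ¬ (0:ℝ) < -x := by linarith
  rw [DΦh, dpsi_nonpos h2, add_zero, dpsi_pos hx]
  set t := x⁻¹ with ht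
  have hAre := exp_c₁_re t
  have hAim := exp_c₁_im t
  set A := Complex.exp (c₁ * (t:ℂ)) with hA
  have e1 : -1 / x = -t := by rw [ht]; field_simp
  have e2 : 1 / x = t := one_div x
  rw [e1, e2]
  simp only [Complex.mul_re, Complex.mul_im, Complex.neg_re, Complex.neg_im,
    Complex.I_re, Complex.I_im, hAre, hAim, hc₁, c₁_im, ← Complex.ofReal_pow,
    Complex.ofReal_re, Complex.ofReal_im]
  ring

def integrand (u : ℝ) : ℝ :=
  if u = 0 then 0
  else u⁻¹ ^ 2 * Real.exp (-1 / |u|) * Real.sin (1 / u) - u⁻¹ ^ 2 * Real.exp (-1 / |u|)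

lemma DΦg_re (x : ℝ) : (DΦg x).re = integrand x := by
  rcases lt_trichotomy x 0 with hx | rfl | hx
  · have h1 : ¬ (0:ℝ) < x := by linarith
    have h2 : (0:ℝ) < -x := by linarith
    rw [DΦg, integrand.eq_def, if_neg hx.ne, dpsi_nonpos h1, dphi_nonpos h1, dpsi_pos h2,
      dphi_pos h2, abs_of_neg hx, zero_sub]
    set t := (-x)⁻¹ with ht
    have hAre := exp_c₁_re t
    have hAim := exp_c₁_im t
    have hBre := exp_neg_re t
    have hBim := exp_neg_im t
    set A := Complex.exp (c₁ * (t:ℂ)) with hA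
    set B := Complex.exp (-(t:ℂ)) with hB
    have e1 : -1 / -x = -t := by rw [ht, inv_neg]; field_simp
    have e2 : 1 / x = -t := by rw [ht, inv_neg]; simp [one_div]
    have e3 : x⁻¹ = -t := by rw [ht, inv_neg]; simp
    rw [e1, e2, e3]
    simp only [Complex.mul_re, Complex.mul_im, Complex.sub_re, Complex.sub_im,
      Complex.add_re, Complex.add_im, Complex.neg_re, Complex.neg_im, Complex.zero_re,
      Complex.zero_im, K_re, K_im, hc₁, c₁_im, hAre, hAim, hBre, hBim,
      ← Complex.ofReal_pow, Complex.ofReal_re, Complex.ofReal_im,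
      Real.sin_neg, Real.cos_neg]
    ring
  · simp [DΦg, integrand, dpsi_nonpos (lt_irrefl 0), dphi_nonpos (lt_irrefl 0)]
  · have h2 : ¬ (0:ℝ) < -x := by linarith
    rw [DΦg, integrand.eq_def, if_neg hx.ne', dpsi_nonpos h2, dphi_nonpos h2, dpsi_pos hx,
      dphi_pos hx, abs_of_pos hx, sub_zero]
    set t := x⁻¹ with ht
    have hAre := exp_c₁_re t
    have hAim := exp_c₁_im t
    have hBre := exp_neg_re t
    have hBim := exp_neg_im t
    set A := Complex.exp (c₁ * (t:ℂ)) with hA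
    set B := Complex.exp (-(t:ℂ)) with hB
    have e1 : -1 / x = -t := by rw [ht]; field_simp
    have e2 : 1 / x = t := one_div x
    rw [e1, e2]
    simp only [Complex.mul_re, Complex.mul_im, Complex.sub_re, Complex.sub_im,
      Complex.add_re, Complex.add_im, Complex.neg_re, Complex.neg_im, Complex.zero_re,
      Complex.zero_im, K_re, K_im, hc₁, c₁_im, hAre, hAim, hBre, hBim,
      ← Complex.ofReal_pow, Complex.ofReal_re, Complex.ofReal_im]
    ring

lemma Φg_zero : Φg 0 = 0 := by
  simp [Φg, psi_nonpos (lt_irrefl 0), phi_nonpos (lt_irrefl 0)]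

lemma continuous_DΦg_re : Continuous fun x => (DΦg x).re := by
  refine Complex.continuous_re.comp ?_
  have cdψ : Continuous dψ := (differentiable_F hc₁ _).continuous
  have cdφ : Continuous dφ := (differentiable_F hc₂ _).continuous
  exact (((continuous_const.mul
      (cdψ.sub (cdψ.comp continuous_neg))).sub cdφ).sub (cdφ.comp continuous_neg))

lemma gEx_eq : gEx = fun x => (Φg x).re := by
  funext x
  have hder : ∀ t ∈ Set.uIcc (0:ℝ) x, HasDerivAt (fun y => (Φg y).re) (integrand t) t := by
    intro t _
    rw [← DΦg_re t]
    exact hasDerivAt_re (hasDerivAt_Φg t)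
  have hint : IntervalIntegrable integrand MeasureTheory.volume 0 x := by
    have he : integrand = fun y => (DΦg y).re := funext fun y => (DΦg_re y).symm
    rw [he]
    exact continuous_DΦg_re.intervalIntegrable 0 x
  have h := intervalIntegral.integral_eq_sub_of_hasDerivAt hder hint
  have hg : gEx x = ∫ u in (0:ℝ)..x, integrand u := rfl
  rw [hg, h, Φg_zero]
  simp

lemma itd_psi_neg (n : ℕ) : iteratedDeriv n (fun x : ℝ => ψ (-x)) 0 = 0 := by
  rw [iteratedDeriv_comp_neg]
  simp [iteratedDeriv_F_zero hc₁ n 1, ψ]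

lemma itd_phi_neg (n : ℕ) : iteratedDeriv n (fun x : ℝ => φ (-x)) 0 = 0 := by
  rw [iteratedDeriv_comp_neg]
  simp [iteratedDeriv_F_zero hc₂ n 1, φ]

lemma itd_Φh_zero (n : ℕ) : iteratedDeriv n Φh 0 = 0 := by
  have E1 : iteratedDeriv n Φh 0 =
      -I * iteratedDeriv n (fun x : ℝ => ψ x - ψ (-x)) 0 :=
    itd_cmul n (-I) (contDiff_ψ.sub contDiff_ψn) 0
  have E2 : iteratedDeriv n (fun x : ℝ => ψ x - ψ (-x)) 0 =
      iteratedDeriv n ψ 0 - iteratedDeriv n (fun x : ℝ => ψ (-x)) 0 :=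
    itd_sub n contDiff_ψ contDiff_ψn 0
  rw [E1, E2, itd_psi_neg n]
  have : iteratedDeriv n ψ 0 = 0 := iteratedDeriv_F_zero hc₁ n 1
  rw [this]
  simp

lemma itd_Φg_zero (n : ℕ) : iteratedDeriv n Φg 0 = 0 := by
  have E1 : iteratedDeriv n Φg 0 =
      iteratedDeriv n (fun x : ℝ => (1 - I)/2 * (ψ x + ψ (-x)) - φ x) 0 +
        iteratedDeriv n (fun x : ℝ => φ (-x)) 0 :=
    itd_add n (((contDiff_const.mul (contDiff_ψ.add contDiff_ψn))).sub contDiff_φ)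
      contDiff_φn 0
  have E2 : iteratedDeriv n (fun x : ℝ => (1 - I)/2 * (ψ x + ψ (-x)) - φ x) 0 =
      iteratedDeriv n (fun x : ℝ => (1 - I)/2 * (ψ x + ψ (-x))) 0 - iteratedDeriv n φ 0 :=
    itd_sub n (contDiff_const.mul (contDiff_ψ.add contDiff_ψn)) contDiff_φ 0
  have E3 : iteratedDeriv n (fun x : ℝ => (1 - I)/2 * (ψ x + ψ (-x))) 0 =
      (1 - I)/2 * iteratedDeriv n (fun x : ℝ => ψ x + ψ (-x)) 0 :=
    itd_cmul n _ (contDiff_ψ.add contDiff_ψn) 0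
  have E4 : iteratedDeriv n (fun x : ℝ => ψ x + ψ (-x)) 0 =
      iteratedDeriv n ψ 0 + iteratedDeriv n (fun x : ℝ => ψ (-x)) 0 :=
    itd_add n contDiff_ψ contDiff_ψn 0
  have hψ : iteratedDeriv n ψ 0 = 0 := iteratedDeriv_F_zero hc₁ n 1
  have hφ' : iteratedDeriv n φ 0 = 0 := iteratedDeriv_F_zero hc₂ n 1
  rw [E1, E2, E3, E4, hψ, hφ', itd_psi_neg n, itd_phi_neg n]
  simp

end GexAux

open GexAux

theorem gEx_hEx_smooth :
    ContDiff ℝ (⊤ : ℕ∞) gEx ∧ ContDiff ℝ (⊤ : ℕ∞) hEx ∧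
    (∀ x : ℝ, 0 < x → HasDerivAt gEx
      (x⁻¹ ^ 2 * Real.exp (-1 / x) * Real.sin (1 / x) - x⁻¹ ^ 2 * Real.exp (-1 / x)) x) ∧
    (∀ x : ℝ, 0 < x → HasDerivAt hEx
      (x⁻¹ ^ 2 * Real.exp (-1 / x) * Real.sin (1 / x)
        - x⁻¹ ^ 2 * Real.exp (-1 / x) * Real.cos (1 / x)) x) ∧
    (∀ n : ℕ, 1 ≤ n → iteratedDeriv n gEx 0 = 0 ∧ iteratedDeriv n hEx 0 = 0) := by
  refine ⟨?_, ?_, ?_, ?_, ?_⟩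
  · rw [gEx_eq]
    exact Complex.reCLM.contDiff.comp contDiff_Φg
  · rw [hEx_eq]
    exact Complex.reCLM.contDiff.comp contDiff_Φh
  · intro x hx
    rw [gEx_eq]
    have h := hasDerivAt_re (hasDerivAt_Φg x)
    rw [DΦg_re x, integrand.eq_def, if_neg hx.ne', abs_of_pos hx] at h
    exact h
  · intro x hx
    rw [hEx_eq]
    have h := hasDerivAt_re (hasDerivAt_Φh x)
    rwa [DΦh_re hx] at h
  · intro n _
    constructor
    · rw [gEx_eq, itd_re n contDiff_Φg 0, itd_Φg_zero n]
      simp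
    · rw [hEx_eq, itd_re n contDiff_Φh 0, itd_Φh_zero n]
      simp
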